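/- Let I₁ = {i : ξ¹_i = ξ²_i} and I₂ = {i : ξ¹_i ≠ ξ²_i}, both nonempty. Define x* ∈ ℝ^N by x*_i = |I₂| for i ∈ I₁ and x*_i = −|I₁| for i ∈ I₂. Then x* is an eigenvector of the Jacobian J_{ξ¹} with eigenvalue −2ε. -/
import Mathlib


/-- The vector x* (= |I₂| on I₁, −|I₁| on I₂) is an eigenvector of J_{ξ¹}
with eigenvalue −2ε. -/
theorem stmt_5 (N : ℕ) (hN : 1 ≤ N) (ε : ℝ) (ξ1 ξ2 : Fin N → ℝ)
    (hξ1 : ∀ i, ξ1 i = 1 ∨ ξ1 i = -1) (hξ2 : ∀ i, ξ2 i = 1 ∨ ξ2 i = -1)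
    (hne : ξ1 ≠ ξ2) (hne' : ξ1 ≠ -ξ2)
    (C : Matrix (Fin N) (Fin N) ℝ) (hC : ∀ i j, C i j = ξ1 i * ξ1 j + ξ2 i * ξ2 j)
    (J : Matrix (Fin N) (Fin N) ℝ)
    (hJ : ∀ i j, J i j =
      if i = j then
        -(1 / N) * (∑ k ∈ Finset.univ.erase i, C i k * ξ1 i * ξ1 k) - 2 * ε * (N - 1) / N
      else (1 / N) * (C i j * ξ1 i * ξ1 j) + 2 * ε / N)
    (x : Fin N → ℝ)
    (hx : ∀ i, x i =
      if ξ1 i = ξ2 i then ((Finset.univ.filter (fun j => ξ1 j ≠ ξ2 j)).card : ℝ)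
      else -((Finset.univ.filter (fun j => ξ1 j = ξ2 j)).card : ℝ)) :
    J.mulVec x = (-2 * ε) • x := by
  have hN0 : (N : ℝ) ≠ 0 := by
    have : (0 : ℝ) < N := by exact_mod_cast Nat.lt_of_lt_of_le Nat.zero_lt_one hN
    linarith
  -- sum of x is zero
  have hS : ∑ j, x j = 0 := by
    rw [Finset.sum_congr rfl (fun j _ => hx j), Finset.sum_ite, Finset.sum_const,
      Finset.sum_const]
    simp only [nsmul_eq_mul]
    have : (Finset.univ.filter (fun j : Fin N => ¬ ξ1 j = ξ2 j))
        = (Finset.univ.filter (fun j : Fin N => ξ1 j ≠ ξ2 j)) := rfl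
    rw [this]
    ring
  have hsq1 : ∀ i, ξ1 i * ξ1 i = 1 := by
    intro i; rcases hξ1 i with h | h <;> rw [h] <;> norm_num
  -- key pointwise identity
  have key : ∀ i j : Fin N, j ≠ i → J i j * (x j - x i) = (2 * ε / N) * (x j - x i) := by
    intro i j hij
    by_cases h : (ξ1 j = ξ2 j) ↔ (ξ1 i = ξ2 i)
    · have hxji : x j = x i := by
        rw [hx i, hx j]
        by_cases h1 : ξ1 i = ξ2 i
        · rw [if_pos h1, if_pos (h.mpr h1)]
        · rw [if_neg h1, if_neg (fun hc => h1 (h.mp hc))]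
      rw [hxji]; ring
    · have hCz : C i j * ξ1 i * ξ1 j = 0 := by
        rw [hC]
        rcases hξ1 i with h1 | h1 <;> rcases hξ2 i with h2 | h2 <;>
          rcases hξ1 j with h3 | h3 <;> rcases hξ2 j with h4 | h4 <;>
          rw [h1, h2, h3, h4] at h ⊢
        all_goals try norm_num at h
        all_goals norm_num
      have : J i j = 2 * ε / N := by
        rw [hJ, if_neg (fun hc => hij hc.symm), hCz]
        ring
      rw [this]
  funext i
  have hcard : ((Finset.univ.erase i).card : ℝ) = (N : ℝ) - 1 := by
    rw [Finset.card_erase_of_mem (Finset.mem_univ i), Finset.card_univ, Fintype.card_fin]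
    rw [Nat.cast_sub hN]; norm_num
  -- row sum identity
  have hrow : J i i = - ∑ j ∈ Finset.univ.erase i, J i j := by
    have h1 : ∑ j ∈ Finset.univ.erase i, J i j
        = ∑ j ∈ Finset.univ.erase i, ((1 / N) * (C i j * ξ1 i * ξ1 j) + 2 * ε / N) :=
      Finset.sum_congr rfl (fun j hj => by
        rw [hJ i j, if_neg (fun hc => (Finset.ne_of_mem_erase hj) hc.symm)])
    rw [hJ i i, if_pos rfl, h1, Finset.sum_add_distrib, ← Finset.mul_sum,
      Finset.sum_const, nsmul_eq_mul, hcard]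
    ring
  have hxsum : ∑ j ∈ Finset.univ.erase i, x j = - x i := by
    have := Finset.add_sum_erase Finset.univ x (Finset.mem_univ i)
    linarith [hS, this]
  show ∑ j, J i j * x j = (-2 * ε) * x i
  rw [← Finset.add_sum_erase Finset.univ (fun j => J i j * x j) (Finset.mem_univ i)]
  have hsum : ∑ j ∈ Finset.univ.erase i, J i j * x j
      = (2 * ε / N) * (- x i - ((N : ℝ) - 1) * x i)
        + (∑ j ∈ Finset.univ.erase i, J i j) * x i := by
    have : ∀ j ∈ Finset.univ.erase i, J i j * x j
        = (2 * ε / N) * (x j - x i) + J i j * x i := by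
      intro j hj
      have := key i j (Finset.ne_of_mem_erase hj)
      nlinarith [this]
    rw [Finset.sum_congr rfl this, Finset.sum_add_distrib, ← Finset.mul_sum,
      ← Finset.sum_mul, Finset.sum_sub_distrib, Finset.sum_const, nsmul_eq_mul,
      hcard, hxsum]
  rw [hsum, hrow]
  field_simp
  ring
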